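/- arXiv:2509.07719 — 5 statements merged into one kernel-verified Lean document; each statement's English description precedes it below -/
import Mathlib

section
/- Let i : (C', J') → (C, J) be a dense morphism of sites between sites, and let F' : (D', K') → (C', J') be a functor. Then F' is a continuous functor if and only if the composite i ∘ F' : (D', K') → (C, J) is a continuous functor. -/
/-!
STATEMENT 0: Let `i : (C', J') → (C, J)` be a dense morphism of sites and
`F' : (D', K') → (C', J')` a functor. Then `F'` is continuous iff `i ∘ F'` is continuous.
-/

open CategoryTheory CategoryTheory.Limits

universe u

namespace Statement0

/-- A functor between sites is *continuous* if precomposition with it sends sheaves of types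
to sheaves. -/
def ContinuousFunctor {C₁ C₂ : Type*} [Category C₁] [Category C₂]
    (F : C₁ ⥤ C₂) (J₁ : GrothendieckTopology C₁) (J₂ : GrothendieckTopology C₂) : Prop :=
  ∀ G : C₂ᵒᵖ ⥤ Type u, Presheaf.IsSheaf J₂ G → Presheaf.IsSheaf J₁ (F.op ⋙ G)

/-- The direct image functor (precomposition, restricted to sheaves) of a continuous functor. -/
def pushforward {C₁ C₂ : Type*} [Category C₁] [Category C₂] (F : C₁ ⥤ C₂)
    (J₁ : GrothendieckTopology C₁) (J₂ : GrothendieckTopology C₂)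
    (h : ContinuousFunctor.{u} F J₁ J₂) : Sheaf J₂ (Type u) ⥤ Sheaf J₁ (Type u) where
  obj G := ⟨F.op ⋙ G.val, h G.val G.cond⟩
  map f := ⟨Functor.whiskerLeft F.op f.hom⟩

/-- A continuous functor is a *morphism of sites* if its direct image functor admits a
left adjoint (the sheafified left Kan extension) which preserves finite limits. -/
def IsMorphismOfSites {C₁ C₂ : Type*} [Category C₁] [Category C₂] (F : C₁ ⥤ C₂)
    (J₁ : GrothendieckTopology C₁) (J₂ : GrothendieckTopology C₂) : Prop :=
  ∃ h : ContinuousFunctor.{u} F J₁ J₂,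
    ∃ (L : Sheaf J₁ (Type u) ⥤ Sheaf J₂ (Type u)) (_ : L ⊣ pushforward F J₁ J₂ h),
      PreservesFiniteLimits L

/-- A morphism of sites is *dense* if its direct image functor is an equivalence. -/
def IsDenseMorphismOfSites {C₁ C₂ : Type*} [Category C₁] [Category C₂] (F : C₁ ⥤ C₂)
    (J₁ : GrothendieckTopology C₁) (J₂ : GrothendieckTopology C₂) : Prop :=
  IsMorphismOfSites.{u} F J₁ J₂ ∧
    ∃ h : ContinuousFunctor.{u} F J₁ J₂, (pushforward F J₁ J₂ h).IsEquivalence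

theorem statement0 {C' C D' : Type u} [SmallCategory C'] [SmallCategory C] [SmallCategory D']
    (J' : GrothendieckTopology C') (J : GrothendieckTopology C)
    (K' : GrothendieckTopology D') (i : C' ⥤ C)
    (hi : IsDenseMorphismOfSites.{u} i J' J) (F' : D' ⥤ C') :
    ContinuousFunctor.{u} F' K' J' ↔ ContinuousFunctor.{u} (F' ⋙ i) K' J := by
  obtain ⟨⟨hic, -⟩, hic', heq⟩ := hi
  constructor
  · intro hF G hG
    exact hF (i.op ⋙ G) (hic G hG)
  · intro hFi G hG
    haveI := heq
    let P := pushforward i J' J hic'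
    let H := P.objPreimage ⟨G, hG⟩
    let e : i.op ⋙ H.val ≅ G := (sheafToPresheaf J' (Type u)).mapIso (P.objObjPreimageIso ⟨G, hG⟩)
    exact (Presheaf.isSheaf_of_iso_iff (Functor.isoWhiskerLeft F'.op e)).1
      (hFi H.val H.cond)

end Statement0
end

section
/- Let i : (C', J') → (C, J) be a dense morphism of sites and let F : (C, J) → (D, K) be a continuous functor. Then F is a morphism of sites if and only if the composite F ∘ i : (C', J') → (D, K) is a morphism of sites. -/
/-!
STATEMENT 1: i dense morphism of sites, F : (C,J) → (D,K) continuous. Then F is a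
morphism of sites iff `F ∘ i` is a morphism of sites.
-/

open CategoryTheory CategoryTheory.Limits

universe u

namespace Statement1

/-- A functor between sites is *continuous* if precomposition with it sends sheaves of types
to sheaves. -/
def ContinuousFunctor {C₁ C₂ : Type*} [Category C₁] [Category C₂]
    (F : C₁ ⥤ C₂) (J₁ : GrothendieckTopology C₁) (J₂ : GrothendieckTopology C₂) : Prop :=
  ∀ G : C₂ᵒᵖ ⥤ Type u, Presheaf.IsSheaf J₂ G → Presheaf.IsSheaf J₁ (F.op ⋙ G)

/-- The direct image functor (precomposition, restricted to sheaves) of a continuous functor. -/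
def pushforward {C₁ C₂ : Type*} [Category C₁] [Category C₂] (F : C₁ ⥤ C₂)
    (J₁ : GrothendieckTopology C₁) (J₂ : GrothendieckTopology C₂)
    (h : ContinuousFunctor.{u} F J₁ J₂) : Sheaf J₂ (Type u) ⥤ Sheaf J₁ (Type u) where
  obj G := ⟨F.op ⋙ G.val, h G.val G.cond⟩
  map f := ⟨Functor.whiskerLeft F.op f.hom⟩

/-- A continuous functor is a *morphism of sites* if its direct image functor admits a
left adjoint (the sheafified left Kan extension) which preserves finite limits. -/
def IsMorphismOfSites {C₁ C₂ : Type*} [Category C₁] [Category C₂] (F : C₁ ⥤ C₂)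
    (J₁ : GrothendieckTopology C₁) (J₂ : GrothendieckTopology C₂) : Prop :=
  ∃ h : ContinuousFunctor.{u} F J₁ J₂,
    ∃ (L : Sheaf J₁ (Type u) ⥤ Sheaf J₂ (Type u)) (_ : L ⊣ pushforward F J₁ J₂ h),
      PreservesFiniteLimits L

/-- A morphism of sites is *dense* if its direct image functor is an equivalence. -/
def IsDenseMorphismOfSites {C₁ C₂ : Type*} [Category C₁] [Category C₂] (F : C₁ ⥤ C₂)
    (J₁ : GrothendieckTopology C₁) (J₂ : GrothendieckTopology C₂) : Prop :=
  IsMorphismOfSites.{u} F J₁ J₂ ∧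
    ∃ h : ContinuousFunctor.{u} F J₁ J₂, (pushforward F J₁ J₂ h).IsEquivalence

theorem statement1 {C' C D : Type u} [SmallCategory C'] [SmallCategory C] [SmallCategory D]
    (J' : GrothendieckTopology C') (J : GrothendieckTopology C)
    (K : GrothendieckTopology D) (i : C' ⥤ C)
    (hi : IsDenseMorphismOfSites.{u} i J' J) (F : C ⥤ D)
    (hF : ContinuousFunctor.{u} F J K) :
    IsMorphismOfSites.{u} F J K ↔ IsMorphismOfSites.{u} (i ⋙ F) J' K := by
  obtain ⟨-, hic, hie⟩ := hi
  have hiF : ContinuousFunctor.{u} (i ⋙ F) J' K := fun G hG => hic (F.op ⋙ G) (hF G hG)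
  have hcomp : pushforward (i ⋙ F) J' K hiF = pushforward F J K hF ⋙ pushforward i J' J hic :=
    rfl
  constructor
  · rintro ⟨h, L, adj, hL⟩
    -- replace h by hF using proof irrelevance
    refine ⟨hiF, (pushforward i J' J hic).asEquivalence.inverse ⋙ L, ?_, ?_⟩
    · rw [hcomp]
      exact ((pushforward i J' J hic).asEquivalence.symm.toAdjunction.comp adj).ofNatIsoRight
        (Iso.refl _)
    · have : PreservesFiniteLimits (pushforward i J' J hic).asEquivalence.inverse :=
        ⟨fun _ => inferInstance⟩
      exact ⟨fun _ => comp_preservesLimitsOfShape _ _⟩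
  · rintro ⟨h, L, adj, hL⟩
    have adj' : L ⊣ pushforward F J K hF ⋙ pushforward i J' J hic := hcomp ▸ adj
    refine ⟨hF, pushforward i J' J hic ⋙ L, ?_, ?_⟩
    · refine ((pushforward i J' J hic).asEquivalence.toAdjunction.comp adj').ofNatIsoRight ?_
      exact Functor.associator _ _ _ ≪≫
        Functor.isoWhiskerLeft (pushforward F J K hF)
          (pushforward i J' J hic).asEquivalence.unitIso.symm ≪≫
        Functor.rightUnitor _
    · have : PreservesFiniteLimits (pushforward i J' J hic) := ⟨fun _ => inferInstance⟩
      exact ⟨fun _ => comp_preservesLimitsOfShape _ _⟩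

end Statement1
end

section
/- Let i : (C', J') → (C, J) be a dense morphism of sites and let F' : (D', K') → (C', J') be a functor. Then F' is a morphism of sites if and only if the composite i ∘ F' : (D', K') → (C, J) is a morphism of sites. -/
/-!
STATEMENT 2: i dense morphism of sites, F' : (D',K') → (C',J') a functor. Then F' is a
morphism of sites iff `i ∘ F'` is a morphism of sites.
-/

open CategoryTheory CategoryTheory.Limits

universe u

namespace Statement2

/-- A functor between sites is *continuous* if precomposition with it sends sheaves of types
to sheaves. -/
def ContinuousFunctor {C₁ C₂ : Type*} [Category C₁] [Category C₂]
    (F : C₁ ⥤ C₂) (J₁ : GrothendieckTopology C₁) (J₂ : GrothendieckTopology C₂) : Prop :=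
  ∀ G : C₂ᵒᵖ ⥤ Type u, Presheaf.IsSheaf J₂ G → Presheaf.IsSheaf J₁ (F.op ⋙ G)

/-- The direct image functor (precomposition, restricted to sheaves) of a continuous functor. -/
def pushforward {C₁ C₂ : Type*} [Category C₁] [Category C₂] (F : C₁ ⥤ C₂)
    (J₁ : GrothendieckTopology C₁) (J₂ : GrothendieckTopology C₂)
    (h : ContinuousFunctor.{u} F J₁ J₂) : Sheaf J₂ (Type u) ⥤ Sheaf J₁ (Type u) where
  obj G := ⟨F.op ⋙ G.val, h G.val G.cond⟩
  map f := ⟨Functor.whiskerLeft F.op f.hom⟩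

/-- A continuous functor is a *morphism of sites* if its direct image functor admits a
left adjoint (the sheafified left Kan extension) which preserves finite limits. -/
def IsMorphismOfSites {C₁ C₂ : Type*} [Category C₁] [Category C₂] (F : C₁ ⥤ C₂)
    (J₁ : GrothendieckTopology C₁) (J₂ : GrothendieckTopology C₂) : Prop :=
  ∃ h : ContinuousFunctor.{u} F J₁ J₂,
    ∃ (L : Sheaf J₁ (Type u) ⥤ Sheaf J₂ (Type u)) (_ : L ⊣ pushforward F J₁ J₂ h),
      PreservesFiniteLimits L

/-- A morphism of sites is *dense* if its direct image functor is an equivalence. -/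
def IsDenseMorphismOfSites {C₁ C₂ : Type*} [Category C₁] [Category C₂] (F : C₁ ⥤ C₂)
    (J₁ : GrothendieckTopology C₁) (J₂ : GrothendieckTopology C₂) : Prop :=
  IsMorphismOfSites.{u} F J₁ J₂ ∧
    ∃ h : ContinuousFunctor.{u} F J₁ J₂, (pushforward F J₁ J₂ h).IsEquivalence

theorem statement2 {C' C D' : Type u} [SmallCategory C'] [SmallCategory C] [SmallCategory D']
    (J' : GrothendieckTopology C') (J : GrothendieckTopology C)
    (K' : GrothendieckTopology D') (i : C' ⥤ C)
    (hi : IsDenseMorphismOfSites.{u} i J' J) (F' : D' ⥤ C') :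
    IsMorphismOfSites.{u} F' K' J' ↔ IsMorphismOfSites.{u} (F' ⋙ i) K' J := by
  obtain ⟨⟨hic, Li, adji, hLi⟩, hie, heq⟩ := hi
  have hEq : (pushforward i J' J hie).IsEquivalence := heq
  constructor
  · rintro ⟨hF', L', adj', hL'⟩
    have hcomp : ContinuousFunctor.{u} (F' ⋙ i) K' J := fun G hG =>
      hF' (i.op ⋙ G) (hic G hG)
    refine ⟨hcomp, L' ⋙ Li, ?_, ?_⟩
    · have : pushforward (F' ⋙ i) K' J hcomp =
          pushforward i J' J hic ⋙ pushforward F' K' J' hF' := rfl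
      rw [this]
      exact adj'.comp adji
    · exact @comp_preservesFiniteLimits _ _ _ _ _ _ _ _ hL' hLi
  · rintro ⟨hc, L, adj, hL⟩
    -- continuity of F' from essential surjectivity of pushforward i
    have hF' : ContinuousFunctor.{u} F' K' J' := by
      intro G' hG'
      haveI := hEq
      obtain ⟨G, ⟨e⟩⟩ := Functor.EssSurj.mem_essImage (F := pushforward i J' J hie) ⟨G', hG'⟩
      have eval : i.op ⋙ G.val ≅ G' := (sheafToPresheaf J' (Type u)).mapIso e
      have := hc G.val G.cond
      exact (Presheaf.isSheaf_of_iso_iff (Functor.isoWhiskerLeft F'.op eval)).1 this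
    haveI := hEq
    let E : Sheaf J (Type u) ≌ Sheaf J' (Type u) :=
      (pushforward i J' J hie).asEquivalence
    have hfac : pushforward (F' ⋙ i) K' J hc =
        pushforward i J' J hie ⋙ pushforward F' K' J' hF' := rfl
    -- L ⊣ P_i ⋙ P_{F'};  E.functor = P_i ⊣ E.inverse
    have adj2 : (L ⋙ E.functor) ⊣ (E.inverse ⋙ (pushforward i J' J hie ⋙
        pushforward F' K' J' hF')) := (hfac ▸ adj).comp E.toAdjunction
    have eiso : E.inverse ⋙ (pushforward i J' J hie ⋙ pushforward F' K' J' hF') ≅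
        pushforward F' K' J' hF' :=
      (Functor.associator _ _ _).symm ≪≫
        Functor.isoWhiskerRight E.counitIso (pushforward F' K' J' hF') ≪≫
        Functor.leftUnitor _
    refine ⟨hF', L ⋙ E.functor, adj2.ofNatIsoRight eiso, ?_⟩
    haveI : PreservesFiniteLimits E.functor := ⟨fun _ _ _ => inferInstance⟩
    exact @comp_preservesFiniteLimits _ _ _ _ _ _ _ _ hL this

end Statement2
end

section
/- Let F : C' → C be a functor and ℂ a C-indexed category. The projection functor q_ℂ^F : 𝒢(ℂF) → 𝒢(ℂ) reflects cartesian arrows: a morphism g of 𝒢(ℂF) is cartesian with respect to the projection p_{ℂF} : 𝒢(ℂF) → C' if and only if its image q_ℂ^F(g) is cartesian with respect to the projection p_ℂ : 𝒢(ℂ) → C. -/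
/-!
STATEMENT 3: For a functor `F : C' ⥤ C` and a `C`-indexed category `𝕏` (written `ℂ` in the
paper), the projection functor `q_𝕏^F : 𝒢(𝕏F) ⥤ 𝒢(𝕏)` reflects cartesian arrows: an arrow
`g` of `𝒢(𝕏F)` is cartesian for the projection `p_{𝕏F} : 𝒢(𝕏F) ⥤ C'` if and only if
`q_𝕏^F(g)` is cartesian for the projection `p_𝕏 : 𝒢(𝕏) ⥤ C`.
-/

open CategoryTheory CategoryTheory.Limits Opposite

universe u

namespace Statement3

/-- The functor `Cat ⥤ Cat` sending a category to its opposite. -/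
def catOp : Cat.{u, u} ⥤ Cat.{u, u} where
  obj A := Cat.of Aᵒᵖ
  map F := (Functor.op F.toFunctor).toCatHom

variable {C : Type u} [SmallCategory C]

/-- The (contravariant) Grothendieck construction `𝒢(𝕏)` of a `C`-indexed category
`𝕏 : Cᵒᵖ ⥤ Cat`: its objects are pairs `(x, c)` with `c` an object of `C` and `x` an object
of `𝕏(c)`, and its morphisms `(x, c) ⟶ (x', c')` are pairs `(u, f)` with `f : c ⟶ c'` in `C`
and `u : x ⟶ 𝕏(f)(x')` in `𝕏(c)`.  (It is realized as the opposite of Mathlib's covariant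
Grothendieck construction applied to the fibrewise-opposite of `𝕏`.) -/
abbrev Groth (𝕏 : Cᵒᵖ ⥤ Cat.{u, u}) : Type u :=
  (Grothendieck (𝕏 ⋙ catOp))ᵒᵖ

/-- The projection functor `p_𝕏 : 𝒢(𝕏) ⥤ C`, sending `(x, c)` to `c`. -/
def pProj (𝕏 : Cᵒᵖ ⥤ Cat.{u, u}) : Groth 𝕏 ⥤ C :=
  (Grothendieck.forget (𝕏 ⋙ catOp)).op ⋙ unopUnop C

/-- For a functor `F : C' ⥤ C`, the projection functor `q_𝕏^F : 𝒢(𝕏F) ⥤ 𝒢(𝕏)` of the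
pullback fibration, where `𝕏F := F.op ⋙ 𝕏 = 𝕏 ∘ Fᵒᵖ`; it sends `(x, c')` to `(x, F(c'))`
and `(u, f')` to `(u, F(f'))`. -/
def qProj {C' : Type u} [SmallCategory C'] (F : C' ⥤ C) (𝕏 : Cᵒᵖ ⥤ Cat.{u, u}) :
    Groth (F.op ⋙ 𝕏) ⥤ Groth 𝕏 :=
  (Grothendieck.pre (𝕏 ⋙ catOp) F.op).op

/-- An arrow `g : d' ⟶ d` is *cartesian* for `p : 𝒟 ⥤ 𝒞` if for every `h : p(d'') ⟶ p(d')`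
and every `k : d'' ⟶ d` with `h ≫ p(g) = p(k)` there is a unique `h' : d'' ⟶ d'` with
`p(h') = h` and `h' ≫ g = k`. -/
def IsCartesianArrow {𝒟 𝒞 : Type*} [Category 𝒟] [Category 𝒞] (p : 𝒟 ⥤ 𝒞)
    {d' d : 𝒟} (g : d' ⟶ d) : Prop :=
  ∀ ⦃d'' : 𝒟⦄ (h : p.obj d'' ⟶ p.obj d') (k : d'' ⟶ d),
    h ≫ p.map g = p.map k → ∃! h' : d'' ⟶ d', p.map h' = h ∧ h' ≫ g = k


theorem isCartesianArrow_of_isIso_fiber (𝕏 : Cᵒᵖ ⥤ Cat.{u,u}) {X Y : Groth 𝕏} (g : X ⟶ Y)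
    [IsIso g.unop.fiber] : IsCartesianArrow (pProj 𝕏) g := by
  intro d'' h k hk
  have hbase : k.unop.base = g.unop.base ≫ h.op := by
    apply Quiver.Hom.unop_inj; exact hk.symm
  refine ⟨Quiver.Hom.op (⟨h.op, ((𝕏 ⋙ catOp).map h.op).toFunctor.map (inv (I := ‹IsIso g.unop.fiber›) g.unop.fiber) ≫
      eqToHom (by rw [hbase]; exact (Functor.congr_obj (congrArg Cat.Hom.toFunctor ((𝕏 ⋙ catOp).map_comp g.unop.base h.op)) Y.unop.fiber).symm) ≫ k.unop.fiber⟩ : X.unop ⟶ d''.unop), ⟨rfl, ?_⟩, ?_⟩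
  · apply Quiver.Hom.unop_inj
    fapply Grothendieck.ext
    · exact hbase.symm
    · simp only [unop_comp, Quiver.Hom.unop_op, Grothendieck.comp_fiber]
      dsimp
      erw [← Functor.map_comp_assoc, IsIso.hom_inv_id]
      simp
      erw [Category.id_comp, eqToHom_trans_assoc, eqToHom_trans_assoc]
      exact Category.id_comp _
  · rintro h'' ⟨hp, hcomp⟩
    apply Quiver.Hom.unop_inj
    have hc : g.unop ≫ h''.unop = k.unop := congrArg Quiver.Hom.unop hcomp
    obtain ⟨b, f⟩ := h''
    have hb : b = h.op := Quiver.Hom.unop_inj hp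
    subst hb
    have := Grothendieck.congr hc
    simp only [Grothendieck.comp_fiber] at this
    fapply Grothendieck.ext
    · rfl
    · dsimp only [Quiver.Hom.unop_op] at this ⊢
      dsimp at this ⊢
      simp only [eqToHom_refl, Category.id_comp]
      erw [eqToHom_comp_iff] at this
      erw [Functor.map_inv, IsIso.eq_inv_comp, this]
      simp
      erw [eqToHom_trans_assoc]
      rfl

theorem isIso_fiber_of_isCartesianArrow (𝕏 : Cᵒᵖ ⥤ Cat.{u,u}) {X Y : Groth 𝕏} (g : X ⟶ Y)
    (hc : IsCartesianArrow (pProj 𝕏) g) : IsIso g.unop.fiber := by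
  let Z : Grothendieck (𝕏 ⋙ catOp) := ⟨X.unop.base, ((𝕏 ⋙ catOp).map g.unop.base).toFunctor.obj Y.unop.fiber⟩
  let κ : Y.unop ⟶ Z := ⟨g.unop.base, 𝟙 _⟩
  obtain ⟨h', ⟨hp, hcomp⟩, -⟩ := hc (d'' := op Z) (𝟙 _) (Quiver.Hom.op κ) (by erw [Category.id_comp]; rfl)
  obtain ⟨t, -, tuniq⟩ := hc (d'' := X) (𝟙 _) g (by simp)
  have hcm : g.unop ≫ h'.unop = κ := congrArg Quiver.Hom.unop hcomp
  obtain ⟨ηb, ηf⟩ := h'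
  have hb : ηb = 𝟙 _ := Quiver.Hom.unop_inj hp
  subst hb
  have eid : ((𝕏 ⋙ catOp).map (𝟙 X.unop.base)) = 𝟙 ((𝕏 ⋙ catOp).obj X.unop.base) :=
    CategoryTheory.Functor.map_id _ _
  have eid' : catOp.map (𝕏.map (𝟙 X.unop.base)) = 𝟙 (catOp.obj (𝕏.obj X.unop.base)) := by
    rw [CategoryTheory.Functor.map_id, CategoryTheory.Functor.map_id]
  have key1 := Grothendieck.congr hcm
  simp only [Grothendieck.comp_fiber] at key1
  dsimp at key1
  rw [Functor.congr_hom (congrArg Cat.Hom.toFunctor eid') g.unop.fiber] at key1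
  let μ : Z ⟶ X.unop := ⟨𝟙 _, eqToHom (by rw [eid]; rfl) ≫ g.unop.fiber⟩
  have hm : Quiver.Hom.op μ ≫ Quiver.Hom.op κ = g := by
    apply Quiver.Hom.unop_inj
    show κ ≫ μ = g.unop
    fapply Grothendieck.ext
    · show g.unop.base ≫ 𝟙 _ = g.unop.base
      simp
    · simp only [Grothendieck.comp_fiber]
      dsimp [κ, μ]
      simp
      erw [eqToHom_trans_assoc, eqToHom_trans_assoc]
      exact Category.id_comp _
  have hmain : Quiver.Hom.op μ ≫ op (Grothendieck.Hom.mk (𝟙 X.unop.base) ηf) = 𝟙 X := by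
    refine (tuniq _ ⟨?_, ?_⟩).trans (tuniq (𝟙 X) ⟨by simp, by simp⟩).symm
    · erw [CategoryTheory.Functor.map_comp, hp, Category.comp_id]
      show (𝟙 Z.base).unop = 𝟙 _
      simp
    · rw [Category.assoc, hcomp, hm]
  have key2 := Grothendieck.congr (congrArg Quiver.Hom.unop hmain)
  simp only [Grothendieck.comp_fiber, Grothendieck.id_fiber] at key2
  dsimp at key2
  rw [Functor.congr_hom (congrArg Cat.Hom.toFunctor eid') ηf] at key2
  refine ⟨eqToHom (by rw [eid]; rfl) ≫ ηf, ?_, ?_⟩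
  · simp at key1
    erw [eqToHom_trans_assoc, eqToHom_comp_iff] at key1
    exact key1.trans (by erw [eqToHom_trans_assoc]; exact Category.comp_id _)
  · simp at key2
    dsimp only [μ] at key2
    erw [eqToHom_trans_assoc, eqToHom_comp_iff, eqToHom_trans_assoc, eqToHom_refl, Category.id_comp] at key2
    simp only [Category.assoc]
    erw [key2]
    simp
    erw [eqToHom_trans_assoc, eqToHom_trans]
    rfl

theorem isCartesianArrow_iff_isIso_fiber (𝕏 : Cᵒᵖ ⥤ Cat.{u,u}) {X Y : Groth 𝕏} (g : X ⟶ Y) :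
    IsCartesianArrow (pProj 𝕏) g ↔ IsIso g.unop.fiber :=
  ⟨fun hc => isIso_fiber_of_isCartesianArrow 𝕏 g hc,
   fun hi => @isCartesianArrow_of_isIso_fiber _ _ 𝕏 _ _ g hi⟩

theorem statement3 {C' : Type u} [SmallCategory C'] (F : C' ⥤ C)
    (𝕏 : Cᵒᵖ ⥤ Cat.{u, u}) {X Y : Groth (F.op ⋙ 𝕏)} (g : X ⟶ Y) :
    IsCartesianArrow (pProj (F.op ⋙ 𝕏)) g ↔
      IsCartesianArrow (pProj 𝕏) ((qProj F 𝕏).map g) := by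
  rw [isCartesianArrow_iff_isIso_fiber, isCartesianArrow_iff_isIso_fiber]
  exact Iff.rfl

end Statement3
end

section
/- Let p : (D, K) → (C, J) and p' : (D', K') → (C', J') be comorphisms of sites between small sites, B : (C', J') → (C, J) a morphism of sites, A : (D', K') → (D, K) a continuous functor, and φ : p ∘ A ⟹ B ∘ p' a natural transformation. Let φ̃ : Sh(A)^* ∘ C_{p'}^* ⟹ C_p^* ∘ Sh(B)^* be the natural transformation induced as the mate of precomposition with φ. Then the η-extension Ã^* : (Sh(D', K')/C_{p'}^*) → (Sh(D, K)/C_p^*), which sends an object (F', E', α' : F' → C_{p'}^*(E')) to (Sh(A)^*(F'), Sh(B)^*(E'), φ̃_{E'} ∘ Sh(A)^*(α')), admits a right adjoint Ã_* : (Sh(D, K)/C_p^*) → (Sh(D', K')/C_{p'}^*); this right adjoint sends an object (F, E, α : F → C_p^*(E)) to the object whose second component is Sh(B)_*(E), whose first component is the pullback of Sh(A)_*(α) : Sh(A)_*(F) → Sh(A)_*(C_p^*(E)) along the canonical comparison map φ̄_E : C_{p'}^*(Sh(B)_*(E)) → Sh(A)_*(C_p^*(E)) (the mate of φ̃), and whose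 structure map is the corresponding pullback projection. -/
/-!
STATEMENT 6: For comorphisms of sites `p : (D, K) → (C, J)`, `p' : (D', K') → (C', J')`,
a morphism of sites `B : (C', J') → (C, J)`, a continuous functor `A : (D', K') → (D, K)` and
a natural transformation `φ : p ∘ A ⟹ B ∘ p'`, the η-extension
`Ã^* : (Sh(D', K')/C_{p'}^*) ⥤ (Sh(D, K)/C_p^*)`,
`(F', E', α') ↦ (Sh(A)^*(F'), Sh(B)^*(E'), φ̃_{E'} ∘ Sh(A)^*(α'))`, admits a right adjoint
`Ã_*`, which sends `(F, E, α)` to the object with second component `Sh(B)_*(E)`, first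
component the pullback of `Sh(A)_*(α)` along the canonical comparison map
`φ̄_E : C_{p'}^*(Sh(B)_*(E)) ⟶ Sh(A)_*(C_p^*(E))` (the mate of `φ̃`), and structure map the
corresponding pullback projection.
-/

open CategoryTheory CategoryTheory.Limits Opposite

universe u

noncomputable section

namespace Statement6

variable {C D C' D' : Type u} [SmallCategory C] [SmallCategory D]
  [SmallCategory C'] [SmallCategory D']

/-- Precomposition with `F.op` on presheaves of types. -/
abbrev pre {X Y : Type u} [SmallCategory X] [SmallCategory Y] (F : X ⥤ Y) :
    (Yᵒᵖ ⥤ Type u) ⥤ (Xᵒᵖ ⥤ Type u) :=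
  (Functor.whiskeringLeft Xᵒᵖ Yᵒᵖ (Type u)).obj F.op

/-- For a comorphism of sites `p : (D, K) ⥤ (C, J)`, the functor
`C_p^* : Sh(C, J) ⥤ Sh(D, K)` given by precomposition with `p` followed by
`K`-sheafification. -/
def Cstar (J : GrothendieckTopology C) (p : D ⥤ C) (K : GrothendieckTopology D) :
    Sheaf J (Type u) ⥤ Sheaf K (Type u) :=
  sheafToPresheaf J (Type u) ⋙ pre p ⋙ presheafToSheaf K (Type u)

variable (J : GrothendieckTopology C) (K : GrothendieckTopology D)
  (J' : GrothendieckTopology C') (K' : GrothendieckTopology D')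
  (p : D ⥤ C) (p' : D' ⥤ C') (B : C' ⥤ C) (A : D' ⥤ D)

/-- The canonical comparison `pre A ⋙ a_{K'} ⟶ a_K ⋙ Sh(A)_*`, obtained as a mate of the
identity across the sheafification adjunctions. -/
def delta3 [Functor.IsContinuous.{u} A K' K] :
    pre A ⋙ presheafToSheaf K' (Type u) ⟶
      presheafToSheaf K (Type u) ⋙ A.sheafPushforwardContinuous (Type u) K' K :=
  ((mateEquiv (sheafificationAdjunction K (Type u))
      (sheafificationAdjunction K' (Type u))).symm
    (TwoSquare.mk _ _ _ _ (𝟙 (sheafToPresheaf K (Type u) ⋙ pre A)))).natTrans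

/-- Precomposition with `φ.op`, as a natural transformation between precomposition
functors on presheaf categories. -/
def theta (φ : A ⋙ p ⟶ p' ⋙ B) : pre B ⋙ pre p' ⟶ pre p ⋙ pre A :=
  (Functor.whiskeringLeft D'ᵒᵖ Cᵒᵖ (Type u)).map (NatTrans.op φ)

end Statement6

namespace Statement6

variable {C D C' D' : Type u} [SmallCategory C] [SmallCategory D]
  [SmallCategory C'] [SmallCategory D']
  (J : GrothendieckTopology C) (K : GrothendieckTopology D)
  (J' : GrothendieckTopology C') (K' : GrothendieckTopology D')
  (p : D ⥤ C) (p' : D' ⥤ C') (B : C' ⥤ C) (A : D' ⥤ D)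

/-- The canonical comparison `φ̄ : C_{p'}^* ∘ Sh(B)_* ⟶ Sh(A)_* ∘ C_p^*` induced by
precomposition with `φ`; it is the mate of `φ̃`. -/
def phiBar [Functor.IsContinuous.{u} A K' K] [Functor.IsContinuous.{u} B J' J]
    (φ : A ⋙ p ⟶ p' ⋙ B) :
    B.sheafPushforwardContinuous (Type u) J' J ⋙ Cstar J' p' K' ⟶
      Cstar J p K ⋙ A.sheafPushforwardContinuous (Type u) K' K :=
  Functor.whiskerRight (Functor.whiskerLeft (sheafToPresheaf J (Type u)) (theta p p' B A φ))
      (presheafToSheaf K' (Type u)) ≫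
    Functor.whiskerLeft (sheafToPresheaf J (Type u) ⋙ pre p) (delta3 K K' A)

/-- `φ̃ : Sh(A)^* ∘ C_{p'}^* ⟶ C_p^* ∘ Sh(B)^*`, the mate of `φ̄`. -/
def phiTilde [Functor.IsContinuous.{u} A K' K] [Functor.IsContinuous.{u} B J' J]
    (φ : A ⋙ p ⟶ p' ⋙ B) :
    Cstar J' p' K' ⋙ A.sheafPullback (Type u) K' K ⟶
      B.sheafPullback (Type u) J' J ⋙ Cstar J p K :=
  ((mateEquiv (B.sheafAdjunctionContinuous (Type u) J' J)
      (A.sheafAdjunctionContinuous (Type u) K' K)).symm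
    (TwoSquare.mk _ _ _ _ (phiBar J K J' K' p p' B A φ))).natTrans

end Statement6

namespace Statement6

variable {C D C' D' : Type u} [SmallCategory C] [SmallCategory D]
  [SmallCategory C'] [SmallCategory D']
  (J : GrothendieckTopology C) (K : GrothendieckTopology D)
  (J' : GrothendieckTopology C') (K' : GrothendieckTopology D')
  (p : D ⥤ C) (p' : D' ⥤ C') (B : C' ⥤ C) (A : D' ⥤ D)

/-- The η-extension of `(A, φ)`:
`(F', E', α') ↦ (Sh(A)^*(F'), Sh(B)^*(E'), φ̃_{E'} ∘ Sh(A)^*(α'))`. -/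
def etaExt [Functor.IsContinuous.{u} A K' K] [Functor.IsContinuous.{u} B J' J]
    (φ : A ⋙ p ⟶ p' ⋙ B) :
    Comma (𝟭 (Sheaf K' (Type u))) (Cstar J' p' K') ⥤
      Comma (𝟭 (Sheaf K (Type u))) (Cstar J p K) where
  obj X :=
    { left := (A.sheafPullback (Type u) K' K).obj X.left
      right := (B.sheafPullback (Type u) J' J).obj X.right
      hom := (A.sheafPullback (Type u) K' K).map X.hom ≫
        (phiTilde J K J' K' p p' B A φ).app X.right }
  map {X Y} m :=
    { left := (A.sheafPullback (Type u) K' K).map m.left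
      right := (B.sheafPullback (Type u) J' J).map m.right
      w := by
        have hw := m.w
        have hnat := (phiTilde J K J' K' p p' B A φ).naturality m.right
        simp only [Functor.id_map] at hw ⊢
        simp only [Functor.comp_map] at hnat
        rw [← Category.assoc, ← Functor.map_comp, hw, Functor.map_comp, Category.assoc,
          hnat, ← Category.assoc] }

end Statement6

namespace Statement6

variable {C D C' D' : Type u} [SmallCategory C] [SmallCategory D]
  [SmallCategory C'] [SmallCategory D']

/-- A functor `p : (D, K) → (C, J)` is a *comorphism of sites* if for every object `d` of `D`
and every `J`-covering sieve `S` on `p(d)` there is a `K`-covering sieve `S'` on `d` with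
`p(S') ⊆ S`. -/
def IsComorphismOfSites {C₁ C₂ : Type*} [Category C₁] [Category C₂] (p : C₁ ⥤ C₂)
    (K : GrothendieckTopology C₁) (J : GrothendieckTopology C₂) : Prop :=
  ∀ (d : C₁) (S : Sieve (p.obj d)), S ∈ J (p.obj d) →
    ∃ S' ∈ K d, ∀ ⦃d' : C₁⦄ (g : d' ⟶ d), S' g → S (p.map g)

/-- Component form of the mates correspondence, relative to the hom-set equivalences. -/
theorem mate_homEquiv {C₁ : Type*} {D₁ : Type*} {E₁ : Type*} {F₁ : Type*}
    [Category C₁] [Category D₁] [Category E₁] [Category F₁]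
    {G : C₁ ⥤ E₁} {H : D₁ ⥤ F₁} {L₁ : C₁ ⥤ D₁} {R₁ : D₁ ⥤ C₁} {L₂ : E₁ ⥤ F₁} {R₂ : F₁ ⥤ E₁}
    (adj₁ : L₁ ⊣ R₁) (adj₂ : L₂ ⊣ R₂) (γ : G ⋙ L₂ ⟶ L₁ ⋙ H)
    {X : C₁} {Y : D₁} (u : L₁.obj X ⟶ Y) :
    (adj₂.homEquiv _ _) (γ.app X ≫ H.map u) =
      G.map ((adj₁.homEquiv _ _) u) ≫ (mateEquiv adj₁ adj₂ γ).app Y := by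
  have h1 := unit_mateEquiv adj₁ adj₂ γ X
  have h2 := (mateEquiv adj₁ adj₂ γ).naturality u
  simp only [Functor.id_obj, Functor.comp_obj, Functor.comp_map] at h1 h2
  rw [Adjunction.homEquiv_unit, Adjunction.homEquiv_unit, R₂.map_comp, ← Category.assoc,
    ← h1, G.map_comp, Category.assoc, Category.assoc, h2]

section Adj

variable (J : GrothendieckTopology C) (K : GrothendieckTopology D)
  (J' : GrothendieckTopology C') (K' : GrothendieckTopology D')
  (p : D ⥤ C) (p' : D' ⥤ C') (B : C' ⥤ C) (A : D' ⥤ D)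
  [Functor.IsContinuous.{u} A K' K] [Functor.IsContinuous.{u} B J' J]
  (φ : A ⋙ p ⟶ p' ⋙ B)

/-- `phiBar` is the mate of `phiTilde`. -/
theorem mateEquiv_phiTilde :
    mateEquiv (B.sheafAdjunctionContinuous (Type u) J' J)
      (A.sheafAdjunctionContinuous (Type u) K' K) (phiTilde J K J' K' p p' B A φ) =
      phiBar J K J' K' p p' B A φ :=
  Equiv.apply_symm_apply _ _

/-- The key computation relating adjoint transposition with `phiTilde` and `phiBar`. -/
theorem key_transpose {F' : Sheaf K' (Type u)} {E' : Sheaf J' (Type u)}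
    (α' : F' ⟶ (Cstar J' p' K').obj E')
    (E : Sheaf J (Type u)) (g : (B.sheafPullback (Type u) J' J).obj E' ⟶ E) :
    ((A.sheafAdjunctionContinuous (Type u) K' K).homEquiv _ _)
      ((A.sheafPullback (Type u) K' K).map α' ≫
        (phiTilde J K J' K' p p' B A φ).app E' ≫ (Cstar J p K).map g) =
      α' ≫ (Cstar J' p' K').map
          (((B.sheafAdjunctionContinuous (Type u) J' J).homEquiv _ _) g) ≫
        (phiBar J K J' K' p p' B A φ).app E := by
  rw [Adjunction.homEquiv_naturality_left,
    mate_homEquiv (B.sheafAdjunctionContinuous (Type u) J' J)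
      (A.sheafAdjunctionContinuous (Type u) K' K) (phiTilde J K J' K' p p' B A φ) g,
    mateEquiv_phiTilde]

/-- The right adjoint `Ã_*` of the η-extension. -/
def etaExtRight :
    Comma (𝟭 (Sheaf K (Type u))) (Cstar J p K) ⥤
      Comma (𝟭 (Sheaf K' (Type u))) (Cstar J' p' K') where
  obj X :=
    { left := pullback ((phiBar J K J' K' p p' B A φ).app X.right)
        ((A.sheafPushforwardContinuous (Type u) K' K).map X.hom)
      right := (B.sheafPushforwardContinuous (Type u) J' J).obj X.right
      hom := pullback.fst _ _ }
  map {X Y} m :=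
    { left := pullback.lift
        (pullback.fst _ _ ≫ (Cstar J' p' K').map
          ((B.sheafPushforwardContinuous (Type u) J' J).map m.right))
        (pullback.snd _ _ ≫ (A.sheafPushforwardContinuous (Type u) K' K).map m.left)
        (by
          have hn := (phiBar J K J' K' p p' B A φ).naturality m.right
          have hw := m.w
          simp only [Functor.id_map] at hw
          simp only [Functor.comp_map] at hn
          rw [Category.assoc, hn, ← Category.assoc, pullback.condition, Category.assoc,
            ← Functor.map_comp, ← hw, Functor.map_comp, Category.assoc])
      right := (B.sheafPushforwardContinuous (Type u) J' J).map m.right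
      w := by
        dsimp only [Functor.id_map]
        rw [pullback.lift_fst] }
  map_id X := by
    apply CommaMorphism.ext
    · apply pullback.hom_ext
      · simp only [Comma.id_left, Comma.id_right, pullback.lift_fst,
          CategoryTheory.Functor.map_id, Category.comp_id, Category.id_comp]
        exact Category.comp_id _
      · simp only [Comma.id_left, Comma.id_right, pullback.lift_snd,
          CategoryTheory.Functor.map_id, Category.comp_id, Category.id_comp]
        erw [CategoryTheory.Functor.map_id]
        exact Category.comp_id _
    · simp only [Comma.id_left, Comma.id_right, CategoryTheory.Functor.map_id]
  map_comp {X Y Z} f g := by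
    apply CommaMorphism.ext
    · apply pullback.hom_ext
      · simp only [Comma.comp_left, Comma.comp_right, Category.assoc, pullback.lift_fst,
          pullback.lift_fst_assoc, Functor.map_comp]
      · simp only [Comma.comp_left, Comma.comp_right, Category.assoc, pullback.lift_snd,
          pullback.lift_snd_assoc, Functor.map_comp]
    · simp only [Comma.comp_left, Comma.comp_right, Functor.map_comp]

/-- The hom-set equivalence of the adjunction `etaExt ⊣ etaExtRight`. -/
def etaExtHomEquiv (X' : Comma (𝟭 (Sheaf K' (Type u))) (Cstar J' p' K'))
    (X : Comma (𝟭 (Sheaf K (Type u))) (Cstar J p K)) :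
    ((etaExt J K J' K' p p' B A φ).obj X' ⟶ X) ≃
      (X' ⟶ (etaExtRight J K J' K' p p' B A φ).obj X) where
  toFun m :=
    { left := pullback.lift
        (X'.hom ≫ (Cstar J' p' K').map
          (((B.sheafAdjunctionContinuous (Type u) J' J).homEquiv _ _) m.right))
        (((A.sheafAdjunctionContinuous (Type u) K' K).homEquiv _ _) m.left)
        (by
          have hw := m.w
          dsimp only [etaExt, Functor.id_obj, Functor.id_map] at hw
          rw [Category.assoc, ← key_transpose J K J' K' p p' B A φ X'.hom X.right m.right]
          erw [← Adjunction.homEquiv_naturality_right]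
          congr 1
          rw [hw, Category.assoc])
      right := ((B.sheafAdjunctionContinuous (Type u) J' J).homEquiv _ _) m.right
      w := by
        dsimp only [etaExtRight, Functor.id_obj, Functor.id_map]
        rw [pullback.lift_fst] }
  invFun n :=
    { left := ((A.sheafAdjunctionContinuous (Type u) K' K).homEquiv _ _).symm
        (n.left ≫ pullback.snd _ _)
      right := ((B.sheafAdjunctionContinuous (Type u) J' J).homEquiv _ _).symm n.right
      w := by
        have hw := n.w
        dsimp only [etaExtRight, Functor.id_obj, Functor.id_map] at hw
        apply ((A.sheafAdjunctionContinuous (Type u) K' K).homEquiv _ _).injective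
        dsimp only [etaExt, Functor.id_obj, Functor.id_map]
        rw [Adjunction.homEquiv_naturality_right, Equiv.apply_symm_apply]
        erw [Category.assoc, ← pullback.condition, ← Category.assoc, hw, Category.assoc]
        have hk := key_transpose J K J' K' p p' B A φ X'.hom X.right
          (((B.sheafAdjunctionContinuous (Type u) J' J).homEquiv _ _).symm n.right)
        erw [Equiv.apply_symm_apply] at hk
        exact hk.symm }
  left_inv m := by
    apply CommaMorphism.ext
    · dsimp only [Functor.id_obj, Functor.id_map]
      erw [pullback.lift_snd, Equiv.symm_apply_apply]
    · exact Equiv.symm_apply_apply _ _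
  right_inv n := by
    have hw := n.w
    dsimp only [etaExtRight, Functor.id_obj, Functor.id_map] at hw
    apply CommaMorphism.ext
    · apply pullback.hom_ext
      · dsimp only [Functor.id_obj, Functor.id_map]
        erw [pullback.lift_fst, Equiv.apply_symm_apply, ← hw]
      · dsimp only [Functor.id_obj, Functor.id_map]
        rw [pullback.lift_snd, Equiv.apply_symm_apply]
        rfl
    · exact Equiv.apply_symm_apply _ _

/-- The adjunction `etaExt ⊣ etaExtRight`. -/
def etaExtAdjunction :
    etaExt J K J' K' p p' B A φ ⊣ etaExtRight J K J' K' p p' B A φ :=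
  Adjunction.mkOfHomEquiv
    { homEquiv := etaExtHomEquiv J K J' K' p p' B A φ
      homEquiv_naturality_left_symm := by
        intro X'' X' X f g
        apply CommaMorphism.ext
        · simp only [etaExtHomEquiv, Comma.comp_left, Equiv.coe_fn_symm_mk,
            Category.assoc]
          erw [Category.assoc, Adjunction.homEquiv_naturality_left_symm]
          rfl
        · simp only [etaExtHomEquiv, Comma.comp_right, Equiv.coe_fn_symm_mk]
          erw [Adjunction.homEquiv_naturality_left_symm]
          rfl
      homEquiv_naturality_right := by
        intro X' X X'' f g
        apply CommaMorphism.ext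
        · apply pullback.hom_ext
          · simp only [etaExtHomEquiv, Equiv.coe_fn_mk, Comma.comp_left,
              Comma.comp_right, Category.assoc, pullback.lift_fst, pullback.lift_fst_assoc]
            erw [Adjunction.homEquiv_naturality_right, Functor.map_comp]
            simp only [etaExtRight, Category.assoc, pullback.lift_fst, pullback.lift_fst_assoc]
          · simp only [etaExtHomEquiv, Equiv.coe_fn_mk, Comma.comp_left,
              Comma.comp_right, Category.assoc, pullback.lift_snd, pullback.lift_snd_assoc]
            erw [Adjunction.homEquiv_naturality_right]
            simp only [etaExtRight, Category.assoc, pullback.lift_snd, pullback.lift_snd_assoc]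
            rfl
        · simp only [etaExtHomEquiv, Equiv.coe_fn_mk, Comma.comp_right]
          erw [Adjunction.homEquiv_naturality_right]
          rfl }

end Adj

theorem statement6
    (J : GrothendieckTopology C) (K : GrothendieckTopology D)
    (J' : GrothendieckTopology C') (K' : GrothendieckTopology D')
    (p : D ⥤ C) (p' : D' ⥤ C') (B : C' ⥤ C) (A : D' ⥤ D)
    (hp : IsComorphismOfSites p K J) (hp' : IsComorphismOfSites p' K' J')
    [Functor.IsContinuous.{u} A K' K] [Functor.IsContinuous.{u} B J' J]
    (hB : PreservesFiniteLimits (B.sheafPullback (Type u) J' J))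
    (φ : A ⋙ p ⟶ p' ⋙ B) :
    ∃ (R : Comma (𝟭 (Sheaf K (Type u))) (Cstar J p K) ⥤
        Comma (𝟭 (Sheaf K' (Type u))) (Cstar J' p' K'))
      (_ : etaExt J K J' K' p p' B A φ ⊣ R),
      ∀ X : Comma (𝟭 (Sheaf K (Type u))) (Cstar J p K),
        ∃ (e : (R.obj X).right ≅ (B.sheafPushforwardContinuous (Type u) J' J).obj X.right)
          (snd : (R.obj X).left ⟶ (A.sheafPushforwardContinuous (Type u) K' K).obj X.left),
          IsPullback ((R.obj X).hom ≫ (Cstar J' p' K').map e.hom) snd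
            ((phiBar J K J' K' p p' B A φ).app X.right)
            ((A.sheafPushforwardContinuous (Type u) K' K).map X.hom) := by
  refine ⟨etaExtRight J K J' K' p p' B A φ, etaExtAdjunction J K J' K' p p' B A φ, fun X => ?_⟩
  refine ⟨Iso.refl _, pullback.snd _ _, ?_⟩
  simp only [etaExtRight, Iso.refl_hom, CategoryTheory.Functor.map_id, Category.comp_id]
  exact IsPullback.of_hasPullback _ _

end Statement6
end
end
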